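/- Let n ≥ 3, let Ω ⊆ ℝ^(n+1) be open, and let u : Ω → ℝ be smooth satisfying the second heavenly hierarchy: for all integers 1 ≤ a < b ≤ n−1, u_{a,b+2} − u_{b,a+2} + u_{1,a} u_{2,b} − u_{1,b} u_{2,a} = 0 on Ω (here u_{i,j} = ∂²u/∂x^i∂x^j). For λ ∈ ℝ and 1 ≤ j ≤ n−1 define the vector field on Ω: X_j = ∂_{j+2} + u_{2,j} ∂₁ − u_{1,j} ∂₂ − λ ∂_j. Then for every λ ∈ ℝ and all 1 ≤ a, b ≤ n−1, the Lie bracket [X_a, X_b] vanishes identically on Ω. -/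

import Mathlib

/-- The `i`-th standard coordinate (basis) vector of `ℝᵐ`. -/
noncomputable def e (m : ℕ) (i : Fin m) : Fin m → ℝ := Pi.single i 1

/-- Partial derivative `∂f/∂xⁱ` of a scalar function on `ℝᵐ`. -/
noncomputable def pd (m : ℕ) (f : (Fin m → ℝ) → ℝ) (i : Fin m) (x : Fin m → ℝ) : ℝ :=
  fderiv ℝ f x (e m i)

/-- Second partial derivative `∂²f/∂xⁱ∂xʲ`. -/
noncomputable def pd2 (m : ℕ) (f : (Fin m → ℝ) → ℝ) (i j : Fin m) (x : Fin m → ℝ) : ℝ :=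
  pd m (fun y => pd m f i y) j x

/-- Lie bracket of vector fields on (an open subset of) `ℝᵐ`:
`[X,Y](x) = DY(x)·X(x) − DX(x)·Y(x)`. -/
noncomputable def vbr (m : ℕ) (X Y : (Fin m → ℝ) → (Fin m → ℝ)) (x : Fin m → ℝ) :
    Fin m → ℝ :=
  fderiv ℝ Y x (X x) - fderiv ℝ X x (Y x)

lemma aux_two_le : (2 : WithTop ℕ∞) ≤ ((⊤:ℕ∞):WithTop ℕ∞) := by
  rw [show ((2:WithTop ℕ∞)) = (((2:ℕ∞)):WithTop ℕ∞) by rfl]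
  exact WithTop.coe_le_coe.mpr le_top

section helpers
variable {m : ℕ} {Ω : Set (Fin m → ℝ)} {f : (Fin m → ℝ) → ℝ}

lemma pd_contDiffOn (hΩ : IsOpen Ω) (hf : ContDiffOn ℝ (⊤:ℕ∞) f Ω) (i : Fin m) :
    ContDiffOn ℝ (⊤:ℕ∞) (pd m f i) Ω :=
  (hf.fderiv_of_isOpen hΩ (by exact_mod_cast le_top)).clm_apply contDiffOn_const

lemma pd_diffAt (hΩ : IsOpen Ω) (hf : ContDiffOn ℝ (⊤:ℕ∞) f Ω) (i : Fin m)
    {x : Fin m → ℝ} (hx : x ∈ Ω) : DifferentiableAt ℝ (pd m f i) x :=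
  ((pd_contDiffOn hΩ hf i).differentiableOn (by simp)).differentiableAt
    (hΩ.mem_nhds hx)

lemma pd2_diffAt (hΩ : IsOpen Ω) (hf : ContDiffOn ℝ (⊤:ℕ∞) f Ω) (i j : Fin m)
    {x : Fin m → ℝ} (hx : x ∈ Ω) : DifferentiableAt ℝ (pd2 m f i j) x :=
  pd_diffAt hΩ (pd_contDiffOn hΩ hf i) j hx

lemma pd2_symm (hΩ : IsOpen Ω) (hf : ContDiffOn ℝ (⊤:ℕ∞) f Ω) (i j : Fin m)
    {x : Fin m → ℝ} (hx : x ∈ Ω) : pd2 m f i j x = pd2 m f j i x := by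
  have hsym : IsSymmSndFDerivAt ℝ f x :=
    (hf.contDiffAt (hΩ.mem_nhds hx)).isSymmSndFDerivAt
      (by rw [minSmoothness_of_isRCLikeNormedField]; exact aux_two_le)
  have hd : DifferentiableAt ℝ (fderiv ℝ f) x :=
    ((hf.fderiv_of_isOpen (m := ((⊤:ℕ∞):WithTop ℕ∞)) hΩ (by exact_mod_cast le_top)).differentiableOn
      (by simp)).differentiableAt (hΩ.mem_nhds hx)
  have key : ∀ v w : Fin m → ℝ, fderiv ℝ (fun y => fderiv ℝ f y v) x w
      = fderiv ℝ (fderiv ℝ f) x w v := by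
    intro v w
    have := fderiv_clm_apply (c := fderiv ℝ f) (u := fun _ => v) hd (differentiableAt_const v)
    rw [show (fun y => fderiv ℝ f y v) = (fun y => (fderiv ℝ f y) ((fun _ => v) y)) from rfl, this]
    simp
  show fderiv ℝ (fun y => fderiv ℝ f y (e m i)) x (e m j)
      = fderiv ℝ (fun y => fderiv ℝ f y (e m j)) x (e m i)
  rw [key, key, hsym]

lemma pd_congr (hΩ : IsOpen Ω) {g : (Fin m → ℝ) → ℝ} (h : ∀ y ∈ Ω, f y = g y)
    (i : Fin m) {x : Fin m → ℝ} (hx : x ∈ Ω) : pd m f i x = pd m g i x := by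
  have hfg : f =ᶠ[nhds x] g := Filter.eventuallyEq_of_mem (hΩ.mem_nhds hx) h
  unfold pd
  rw [hfg.fderiv_eq]

lemma d3_s23 (hΩ : IsOpen Ω) (hf : ContDiffOn ℝ (⊤:ℕ∞) f Ω) (i j k : Fin m)
    {x : Fin m → ℝ} (hx : x ∈ Ω) :
    pd m (pd2 m f i j) k x = pd m (pd2 m f i k) j x :=
  pd2_symm hΩ (pd_contDiffOn hΩ hf i) j k hx

lemma d3_s12 (hΩ : IsOpen Ω) (hf : ContDiffOn ℝ (⊤:ℕ∞) f Ω) (i j k : Fin m)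
    {x : Fin m → ℝ} (hx : x ∈ Ω) :
    pd m (pd2 m f i j) k x = pd m (pd2 m f j i) k x :=
  pd_congr hΩ (fun y hy => pd2_symm hΩ hf i j hy) k hx

lemma pd_comb {g1 g2 g3 g4 g5 g6 : (Fin m → ℝ) → ℝ} {x : Fin m → ℝ}
    (h1 : DifferentiableAt ℝ g1 x) (h2 : DifferentiableAt ℝ g2 x)
    (h3 : DifferentiableAt ℝ g3 x) (h4 : DifferentiableAt ℝ g4 x)
    (h5 : DifferentiableAt ℝ g5 x) (h6 : DifferentiableAt ℝ g6 x) (k : Fin m) :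
    pd m (fun y => g1 y - g2 y + g3 y * g4 y - g5 y * g6 y) k x
      = pd m g1 k x - pd m g2 k x
        + (pd m g3 k x * g4 x + g3 x * pd m g4 k x)
        - (pd m g5 k x * g6 x + g5 x * pd m g6 k x) := by
  have H : HasFDerivAt (fun y => g1 y - g2 y + g3 y * g4 y - g5 y * g6 y)
      (((fderiv ℝ g1 x - fderiv ℝ g2 x) + (g3 x • fderiv ℝ g4 x + g4 x • fderiv ℝ g3 x))
        - (g5 x • fderiv ℝ g6 x + g6 x • fderiv ℝ g5 x)) x :=
    ((h1.hasFDerivAt.sub h2.hasFDerivAt).add (h3.hasFDerivAt.mul h4.hasFDerivAt)).sub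
      (h5.hasFDerivAt.mul h6.hasFDerivAt)
  unfold pd
  rw [H.fderiv]
  simp only [ContinuousLinearMap.sub_apply, ContinuousLinearMap.add_apply,
    ContinuousLinearMap.coe_smul', Pi.smul_apply, smul_eq_mul]
  ring

lemma pdrfl (g : (Fin m → ℝ) → ℝ) (i : Fin m) (x : Fin m → ℝ) :
    fderiv ℝ g x (e m i) = pd m g i x := rfl

end helpers

set_option maxHeartbeats 2000000 in
/-- The Frobenius condition for the Lax distribution of the second Plebansky
heavenly hierarchy holds on every solution: the Lax fields
`X_j = ∂_{j+2} + u_{2,j}∂₁ − u_{1,j}∂₂ − λ∂_j`, `1 ≤ j ≤ n−1`, pairwise commute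
(coordinates `x¹,…,x^{n+1}` are indexed by `0,…,n`, so the 1-based index `i`
corresponds to `⟨i−1, _⟩ : Fin (n+1)`). -/
theorem stmt_16 (n : ℕ) (hn : 3 ≤ n) (Ω : Set (Fin (n+1) → ℝ)) (hΩ : IsOpen Ω)
    (u : (Fin (n+1) → ℝ) → ℝ) (hu : ContDiffOn ℝ (⊤:ℕ∞) u Ω)
    (heq : ∀ a b : ℕ, ∀ (ha : 1 ≤ a) (hab : a < b) (hb : b ≤ n - 1), ∀ x ∈ Ω,
      pd2 (n+1) u ⟨a-1, by omega⟩ ⟨b+1, by omega⟩ x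
      - pd2 (n+1) u ⟨b-1, by omega⟩ ⟨a+1, by omega⟩ x
      + pd2 (n+1) u ⟨0, by omega⟩ ⟨a-1, by omega⟩ x
        * pd2 (n+1) u ⟨1, by omega⟩ ⟨b-1, by omega⟩ x
      - pd2 (n+1) u ⟨0, by omega⟩ ⟨b-1, by omega⟩ x
        * pd2 (n+1) u ⟨1, by omega⟩ ⟨a-1, by omega⟩ x = 0)
    (X : ℝ → ℕ → (Fin (n+1) → ℝ) → (Fin (n+1) → ℝ))
    (hX : ∀ (lam : ℝ) (j : ℕ) (hj1 : 1 ≤ j) (hj2 : j ≤ n - 1), ∀ x,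
      X lam j x = e (n+1) ⟨j+1, by omega⟩
        + pd2 (n+1) u ⟨1, by omega⟩ ⟨j-1, by omega⟩ x • e (n+1) ⟨0, by omega⟩
        - pd2 (n+1) u ⟨0, by omega⟩ ⟨j-1, by omega⟩ x • e (n+1) ⟨1, by omega⟩
        - lam • e (n+1) ⟨j-1, by omega⟩) :
    ∀ (lam : ℝ) (a b : ℕ), 1 ≤ a → a ≤ n - 1 → 1 ≤ b → b ≤ n - 1 →
      ∀ x ∈ Ω, vbr (n+1) (X lam a) (X lam b) x = 0 := by
  have key : ∀ (lam : ℝ) (a b : ℕ), 1 ≤ a → a < b → b ≤ n - 1 →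
      ∀ x ∈ Ω, vbr (n+1) (X lam a) (X lam b) x = 0 := by
    intro lam a b ha1 hab hb2 x hx
    have ha2 : a ≤ n - 1 := by omega
    have hb1 : 1 ≤ b := by omega
    obtain ⟨o0, ho0⟩ : ∃ t : Fin (n+1), t = ⟨0, by omega⟩ := ⟨_, rfl⟩
    obtain ⟨o1, ho1⟩ : ∃ t : Fin (n+1), t = ⟨1, by omega⟩ := ⟨_, rfl⟩
    obtain ⟨A, hA⟩ : ∃ t : Fin (n+1), t = ⟨a-1, by omega⟩ := ⟨_, rfl⟩
    obtain ⟨A', hA'⟩ : ∃ t : Fin (n+1), t = ⟨a+1, by omega⟩ := ⟨_, rfl⟩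
    obtain ⟨B, hB⟩ : ∃ t : Fin (n+1), t = ⟨b-1, by omega⟩ := ⟨_, rfl⟩
    obtain ⟨B', hB'⟩ : ∃ t : Fin (n+1), t = ⟨b+1, by omega⟩ := ⟨_, rfl⟩
    -- the two Lax fields as explicit formulas
    have hXa : X lam a = fun y => e (n+1) A'
        + pd2 (n+1) u o1 A y • e (n+1) o0
        - pd2 (n+1) u o0 A y • e (n+1) o1
        - lam • e (n+1) A := by
      rw [hA, hA', ho0, ho1]; exact funext (hX lam a ha1 ha2)
    have hXb : X lam b = fun y => e (n+1) B'
        + pd2 (n+1) u o1 B y • e (n+1) o0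
        - pd2 (n+1) u o0 B y • e (n+1) o1
        - lam • e (n+1) B := by
      rw [hB, hB', ho0, ho1]; exact funext (hX lam b hb1 hb2)
    -- differentiability of the coefficients
    have dqa : DifferentiableAt ℝ (pd2 (n+1) u o1 A) x := pd2_diffAt hΩ hu o1 A hx
    have dpa : DifferentiableAt ℝ (pd2 (n+1) u o0 A) x := pd2_diffAt hΩ hu o0 A hx
    have dqb : DifferentiableAt ℝ (pd2 (n+1) u o1 B) x := pd2_diffAt hΩ hu o1 B hx
    have dpb : DifferentiableAt ℝ (pd2 (n+1) u o0 B) x := pd2_diffAt hΩ hu o0 B hx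
    -- Fréchet derivatives of the Lax fields
    have hfa : HasFDerivAt (X lam a)
        ((fderiv ℝ (pd2 (n+1) u o1 A) x).smulRight (e (n+1) o0)
          - (fderiv ℝ (pd2 (n+1) u o0 A) x).smulRight (e (n+1) o1)) x := by
      rw [hXa]
      exact (((dqa.hasFDerivAt.smul_const (e (n+1) o0)).const_add _).sub
        (dpa.hasFDerivAt.smul_const _)).sub_const _
    have hfb : HasFDerivAt (X lam b)
        ((fderiv ℝ (pd2 (n+1) u o1 B) x).smulRight (e (n+1) o0)
          - (fderiv ℝ (pd2 (n+1) u o0 B) x).smulRight (e (n+1) o1)) x := by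
      rw [hXb]
      exact (((dqb.hasFDerivAt.smul_const (e (n+1) o0)).const_add _).sub
        (dpb.hasFDerivAt.smul_const _)).sub_const _
    -- expansion of a linear functional applied to the Lax fields at x
    have expandA : ∀ (L : (Fin (n+1) → ℝ) →L[ℝ] ℝ), L (X lam a x)
        = L (e (n+1) A') + pd2 (n+1) u o1 A x * L (e (n+1) o0)
          - pd2 (n+1) u o0 A x * L (e (n+1) o1) - lam * L (e (n+1) A) := by
      intro L
      rw [hXa]
      simp [map_add, map_sub, map_smul, smul_eq_mul]
    have expandB : ∀ (L : (Fin (n+1) → ℝ) →L[ℝ] ℝ), L (X lam b x)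
        = L (e (n+1) B') + pd2 (n+1) u o1 B x * L (e (n+1) o0)
          - pd2 (n+1) u o0 B x * L (e (n+1) o1) - lam * L (e (n+1) B) := by
      intro L
      rw [hXb]
      simp [map_add, map_sub, map_smul, smul_eq_mul]
    -- the heavenly equation, differentiated
    have hEk : ∀ k : Fin (n+1),
        pd (n+1) (fun y => pd2 (n+1) u A B' y - pd2 (n+1) u B A' y
          + pd2 (n+1) u o0 A y * pd2 (n+1) u o1 B y
          - pd2 (n+1) u o0 B y * pd2 (n+1) u o1 A y) k x = 0 := by
      intro k
      have h0 : ∀ y ∈ Ω, (pd2 (n+1) u A B' y - pd2 (n+1) u B A' y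
          + pd2 (n+1) u o0 A y * pd2 (n+1) u o1 B y
          - pd2 (n+1) u o0 B y * pd2 (n+1) u o1 A y) = 0 := by
        intro y hy
        rw [hA, hA', hB, hB', ho0, ho1]
        exact heq a b ha1 hab hb2 y hy
      have hfg : (fun y => pd2 (n+1) u A B' y - pd2 (n+1) u B A' y
          + pd2 (n+1) u o0 A y * pd2 (n+1) u o1 B y
          - pd2 (n+1) u o0 B y * pd2 (n+1) u o1 A y) =ᶠ[nhds x] (fun _ => (0:ℝ)) :=
        Filter.eventuallyEq_of_mem (hΩ.mem_nhds hx) h0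
      unfold pd
      rw [hfg.fderiv_eq]
      simp
    have hEexp : ∀ k : Fin (n+1),
        pd (n+1) (pd2 (n+1) u A B') k x - pd (n+1) (pd2 (n+1) u B A') k x
        + (pd (n+1) (pd2 (n+1) u o0 A) k x * pd2 (n+1) u o1 B x
            + pd2 (n+1) u o0 A x * pd (n+1) (pd2 (n+1) u o1 B) k x)
        - (pd (n+1) (pd2 (n+1) u o0 B) k x * pd2 (n+1) u o1 A x
            + pd2 (n+1) u o0 B x * pd (n+1) (pd2 (n+1) u o1 A) k x) = 0 := by
      intro k
      rw [← pd_comb (pd2_diffAt hΩ hu A B' hx) (pd2_diffAt hΩ hu B A' hx)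
        dpa dqb dpb dqa k]
      exact hEk k
    -- third-derivative symmetries
    have s23 : ∀ i j k : Fin (n+1),
        pd (n+1) (pd2 (n+1) u i j) k x = pd (n+1) (pd2 (n+1) u i k) j x :=
      fun i j k => d3_s23 hΩ hu i j k hx
    have s12 : ∀ i j k : Fin (n+1),
        pd (n+1) (pd2 (n+1) u i j) k x = pd (n+1) (pd2 (n+1) u j i) k x :=
      fun i j k => d3_s12 hΩ hu i j k hx
    -- the two scalar identities
    have hQ : fderiv ℝ (pd2 (n+1) u o1 B) x (X lam a x)
        = fderiv ℝ (pd2 (n+1) u o1 A) x (X lam b x) := by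
      rw [expandA, expandB]
      simp only [pdrfl]
      have i1 : pd (n+1) (pd2 (n+1) u o1 B) A' x = pd (n+1) (pd2 (n+1) u B A') o1 x :=
        (s12 o1 B A').trans (s23 B o1 A')
      have i2 : pd (n+1) (pd2 (n+1) u o1 A) B' x = pd (n+1) (pd2 (n+1) u A B') o1 x :=
        (s12 o1 A B').trans (s23 A o1 B')
      have i3 : pd (n+1) (pd2 (n+1) u o1 B) o0 x = pd (n+1) (pd2 (n+1) u o0 B) o1 x :=
        (s23 o1 B o0).trans ((s12 o1 o0 B).trans (s23 o0 o1 B))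
      have i4 : pd (n+1) (pd2 (n+1) u o1 A) o0 x = pd (n+1) (pd2 (n+1) u o0 A) o1 x :=
        (s23 o1 A o0).trans ((s12 o1 o0 A).trans (s23 o0 o1 A))
      have i5 : pd (n+1) (pd2 (n+1) u o1 B) A x = pd (n+1) (pd2 (n+1) u o1 A) B x :=
        s23 o1 B A
      linear_combination i1 - i2 + pd2 (n+1) u o1 A x * i3 - pd2 (n+1) u o1 B x * i4
        - lam * i5 - hEexp o1
    have hP : fderiv ℝ (pd2 (n+1) u o0 B) x (X lam a x)
        = fderiv ℝ (pd2 (n+1) u o0 A) x (X lam b x) := by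
      rw [expandA, expandB]
      simp only [pdrfl]
      have j1 : pd (n+1) (pd2 (n+1) u o0 B) A' x = pd (n+1) (pd2 (n+1) u B A') o0 x :=
        (s12 o0 B A').trans (s23 B o0 A')
      have j2 : pd (n+1) (pd2 (n+1) u o0 A) B' x = pd (n+1) (pd2 (n+1) u A B') o0 x :=
        (s12 o0 A B').trans (s23 A o0 B')
      have j3 : pd (n+1) (pd2 (n+1) u o0 B) o1 x = pd (n+1) (pd2 (n+1) u o1 B) o0 x :=
        (s23 o0 B o1).trans ((s12 o0 o1 B).trans (s23 o1 o0 B))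
      have j4 : pd (n+1) (pd2 (n+1) u o0 A) o1 x = pd (n+1) (pd2 (n+1) u o1 A) o0 x :=
        (s23 o0 A o1).trans ((s12 o0 o1 A).trans (s23 o1 o0 A))
      have j5 : pd (n+1) (pd2 (n+1) u o0 B) A x = pd (n+1) (pd2 (n+1) u o0 A) B x :=
        s23 o0 B A
      linear_combination j1 - j2 - pd2 (n+1) u o0 A x * j3 + pd2 (n+1) u o0 B x * j4
        - lam * j5 - hEexp o0
    -- conclude
    unfold vbr
    rw [hfa.fderiv, hfb.fderiv]
    simp only [ContinuousLinearMap.sub_apply, ContinuousLinearMap.smulRight_apply]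
    rw [hQ, hP]
    abel
  intro lam a b ha1 ha2 hb1 hb2 x hx
  rcases lt_trichotomy a b with h | h | h
  · exact key lam a b ha1 h hb2 x hx
  · subst h
    unfold vbr
    simp
  · have hz := key lam b a hb1 h ha2 x hx
    unfold vbr at hz ⊢
    have heqd := sub_eq_zero.mp hz
    rw [heqd]
    simp
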